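/- sin(2π/13)sin(3π/13)/(sin(4π/13)sin(6π/13)) - sin(π/13)sin(5π/13)/(sin(2π/13)sin(3π/13)) - sin(4π/13)sin(6π/13)/(sin(5π/13)sin(π/13)) = -4. -/

import Mathlib

open Real

set_option maxHeartbeats 2000000 in
theorem stmt_13 :
    Real.sin (2 * π / 13) * Real.sin (3 * π / 13) /
      (Real.sin (4 * π / 13) * Real.sin (6 * π / 13))
      - Real.sin (π / 13) * Real.sin (5 * π / 13) /
        (Real.sin (2 * π / 13) * Real.sin (3 * π / 13))
      - Real.sin (4 * π / 13) * Real.sin (6 * π / 13) /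
        (Real.sin (5 * π / 13) * Real.sin (π / 13)) = -4 := by
  have pi_pos := Real.pi_pos
  have hsq : Real.sin (π / 13) ^ 2 = 1 - Real.cos (π / 13) ^ 2 := Real.sin_sq _
  have hs2 : Real.sin (2 * π / 13) = Real.sin (π / 13) * (2*Real.cos (π / 13)) := by
    rw [show (2 * π / 13 : ℝ) = π / 13 + π / 13 by ring, Real.sin_add]
    ring
  have hc2 : Real.cos (2 * π / 13) = 2*Real.cos (π / 13)^2 + (-1) := by
    rw [show (2 * π / 13 : ℝ) = π / 13 + π / 13 by ring, Real.cos_add]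
    linear_combination (-1 : ℝ) * hsq
  have hs3 : Real.sin (3 * π / 13) = Real.sin (π / 13) * (4*Real.cos (π / 13)^2 + (-1)) := by
    rw [show (3 * π / 13 : ℝ) = 2 * π / 13 + π / 13 by ring, Real.sin_add, hs2, hc2]
    ring
  have hc3 : Real.cos (3 * π / 13) = 4*Real.cos (π / 13)^3 + (-3)*Real.cos (π / 13) := by
    rw [show (3 * π / 13 : ℝ) = 2 * π / 13 + π / 13 by ring, Real.cos_add, hs2, hc2]
    linear_combination ((-2)*Real.cos (π / 13)) * hsq
  have hs4 : Real.sin (4 * π / 13) = Real.sin (π / 13) * (8*Real.cos (π / 13)^3 + (-4)*Real.cos (π / 13)) := by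
    rw [show (4 * π / 13 : ℝ) = 3 * π / 13 + π / 13 by ring, Real.sin_add, hs3, hc3]
    ring
  have hc4 : Real.cos (4 * π / 13) = 8*Real.cos (π / 13)^4 + (-8)*Real.cos (π / 13)^2 + 1 := by
    rw [show (4 * π / 13 : ℝ) = 3 * π / 13 + π / 13 by ring, Real.cos_add, hs3, hc3]
    linear_combination ((-4)*Real.cos (π / 13)^2 + 1) * hsq
  have hs5 : Real.sin (5 * π / 13) = Real.sin (π / 13) * (16*Real.cos (π / 13)^4 + (-12)*Real.cos (π / 13)^2 + 1) := by
    rw [show (5 * π / 13 : ℝ) = 4 * π / 13 + π / 13 by ring, Real.sin_add, hs4, hc4]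
    ring
  have hc5 : Real.cos (5 * π / 13) = 16*Real.cos (π / 13)^5 + (-20)*Real.cos (π / 13)^3 + 5*Real.cos (π / 13) := by
    rw [show (5 * π / 13 : ℝ) = 4 * π / 13 + π / 13 by ring, Real.cos_add, hs4, hc4]
    linear_combination ((-8)*Real.cos (π / 13)^3 + 4*Real.cos (π / 13)) * hsq
  have hs6 : Real.sin (6 * π / 13) = Real.sin (π / 13) * (32*Real.cos (π / 13)^5 + (-32)*Real.cos (π / 13)^3 + 6*Real.cos (π / 13)) := by
    rw [show (6 * π / 13 : ℝ) = 5 * π / 13 + π / 13 by ring, Real.sin_add, hs5, hc5]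
    ring
  have hc6 : Real.cos (6 * π / 13) = 32*Real.cos (π / 13)^6 + (-48)*Real.cos (π / 13)^4 + 18*Real.cos (π / 13)^2 + (-1) := by
    rw [show (6 * π / 13 : ℝ) = 5 * π / 13 + π / 13 by ring, Real.cos_add, hs5, hc5]
    linear_combination ((-16)*Real.cos (π / 13)^4 + 12*Real.cos (π / 13)^2 + (-1)) * hsq
  have hs7 : Real.sin (7 * π / 13) = Real.sin (π / 13) * (64*Real.cos (π / 13)^6 + (-80)*Real.cos (π / 13)^4 + 24*Real.cos (π / 13)^2 + (-1)) := by
    rw [show (7 * π / 13 : ℝ) = 6 * π / 13 + π / 13 by ring, Real.sin_add, hs6, hc6]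
    ring
  have hc7 : Real.cos (7 * π / 13) = 64*Real.cos (π / 13)^7 + (-112)*Real.cos (π / 13)^5 + 56*Real.cos (π / 13)^3 + (-7)*Real.cos (π / 13) := by
    rw [show (7 * π / 13 : ℝ) = 6 * π / 13 + π / 13 by ring, Real.cos_add, hs6, hc6]
    linear_combination ((-32)*Real.cos (π / 13)^5 + 32*Real.cos (π / 13)^3 + (-6)*Real.cos (π / 13)) * hsq
  have hs8 : Real.sin (8 * π / 13) = Real.sin (π / 13) * (128*Real.cos (π / 13)^7 + (-192)*Real.cos (π / 13)^5 + 80*Real.cos (π / 13)^3 + (-8)*Real.cos (π / 13)) := by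
    rw [show (8 * π / 13 : ℝ) = 7 * π / 13 + π / 13 by ring, Real.sin_add, hs7, hc7]
    ring
  have hc8 : Real.cos (8 * π / 13) = 128*Real.cos (π / 13)^8 + (-256)*Real.cos (π / 13)^6 + 160*Real.cos (π / 13)^4 + (-32)*Real.cos (π / 13)^2 + 1 := by
    rw [show (8 * π / 13 : ℝ) = 7 * π / 13 + π / 13 by ring, Real.cos_add, hs7, hc7]
    linear_combination ((-64)*Real.cos (π / 13)^6 + 80*Real.cos (π / 13)^4 + (-24)*Real.cos (π / 13)^2 + 1) * hsq
  have hs9 : Real.sin (9 * π / 13) = Real.sin (π / 13) * (256*Real.cos (π / 13)^8 + (-448)*Real.cos (π / 13)^6 + 240*Real.cos (π / 13)^4 + (-40)*Real.cos (π / 13)^2 + 1) := by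
    rw [show (9 * π / 13 : ℝ) = 8 * π / 13 + π / 13 by ring, Real.sin_add, hs8, hc8]
    ring
  have hc9 : Real.cos (9 * π / 13) = 256*Real.cos (π / 13)^9 + (-576)*Real.cos (π / 13)^7 + 432*Real.cos (π / 13)^5 + (-120)*Real.cos (π / 13)^3 + 9*Real.cos (π / 13) := by
    rw [show (9 * π / 13 : ℝ) = 8 * π / 13 + π / 13 by ring, Real.cos_add, hs8, hc8]
    linear_combination ((-128)*Real.cos (π / 13)^7 + 192*Real.cos (π / 13)^5 + (-80)*Real.cos (π / 13)^3 + 8*Real.cos (π / 13)) * hsq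
  have hs10 : Real.sin (10 * π / 13) = Real.sin (π / 13) * (512*Real.cos (π / 13)^9 + (-1024)*Real.cos (π / 13)^7 + 672*Real.cos (π / 13)^5 + (-160)*Real.cos (π / 13)^3 + 10*Real.cos (π / 13)) := by
    rw [show (10 * π / 13 : ℝ) = 9 * π / 13 + π / 13 by ring, Real.sin_add, hs9, hc9]
    ring
  have hc10 : Real.cos (10 * π / 13) = 512*Real.cos (π / 13)^10 + (-1280)*Real.cos (π / 13)^8 + 1120*Real.cos (π / 13)^6 + (-400)*Real.cos (π / 13)^4 + 50*Real.cos (π / 13)^2 + (-1) := by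
    rw [show (10 * π / 13 : ℝ) = 9 * π / 13 + π / 13 by ring, Real.cos_add, hs9, hc9]
    linear_combination ((-256)*Real.cos (π / 13)^8 + 448*Real.cos (π / 13)^6 + (-240)*Real.cos (π / 13)^4 + 40*Real.cos (π / 13)^2 + (-1)) * hsq
  have hs11 : Real.sin (11 * π / 13) = Real.sin (π / 13) * (1024*Real.cos (π / 13)^10 + (-2304)*Real.cos (π / 13)^8 + 1792*Real.cos (π / 13)^6 + (-560)*Real.cos (π / 13)^4 + 60*Real.cos (π / 13)^2 + (-1)) := by
    rw [show (11 * π / 13 : ℝ) = 10 * π / 13 + π / 13 by ring, Real.sin_add, hs10, hc10]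
    ring
  have hc11 : Real.cos (11 * π / 13) = 1024*Real.cos (π / 13)^11 + (-2816)*Real.cos (π / 13)^9 + 2816*Real.cos (π / 13)^7 + (-1232)*Real.cos (π / 13)^5 + 220*Real.cos (π / 13)^3 + (-11)*Real.cos (π / 13) := by
    rw [show (11 * π / 13 : ℝ) = 10 * π / 13 + π / 13 by ring, Real.cos_add, hs10, hc10]
    linear_combination ((-512)*Real.cos (π / 13)^9 + 1024*Real.cos (π / 13)^7 + (-672)*Real.cos (π / 13)^5 + 160*Real.cos (π / 13)^3 + (-10)*Real.cos (π / 13)) * hsq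
  have hs12 : Real.sin (12 * π / 13) = Real.sin (π / 13) * (2048*Real.cos (π / 13)^11 + (-5120)*Real.cos (π / 13)^9 + 4608*Real.cos (π / 13)^7 + (-1792)*Real.cos (π / 13)^5 + 280*Real.cos (π / 13)^3 + (-12)*Real.cos (π / 13)) := by
    rw [show (12 * π / 13 : ℝ) = 11 * π / 13 + π / 13 by ring, Real.sin_add, hs11, hc11]
    ring
  have hc12 : Real.cos (12 * π / 13) = 2048*Real.cos (π / 13)^12 + (-6144)*Real.cos (π / 13)^10 + 6912*Real.cos (π / 13)^8 + (-3584)*Real.cos (π / 13)^6 + 840*Real.cos (π / 13)^4 + (-72)*Real.cos (π / 13)^2 + 1 := by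
    rw [show (12 * π / 13 : ℝ) = 11 * π / 13 + π / 13 by ring, Real.cos_add, hs11, hc11]
    linear_combination ((-1024)*Real.cos (π / 13)^10 + 2304*Real.cos (π / 13)^8 + (-1792)*Real.cos (π / 13)^6 + 560*Real.cos (π / 13)^4 + (-60)*Real.cos (π / 13)^2 + 1) * hsq
  have hc13 : Real.cos (13 * π / 13) = 4096*Real.cos (π / 13)^13 + (-13312)*Real.cos (π / 13)^11 + 16640*Real.cos (π / 13)^9 + (-9984)*Real.cos (π / 13)^7 + 2912*Real.cos (π / 13)^5 + (-364)*Real.cos (π / 13)^3 + 13*Real.cos (π / 13) := by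
    rw [show (13 * π / 13 : ℝ) = 12 * π / 13 + π / 13 by ring, Real.cos_add, hs12, hc12]
    linear_combination ((-2048)*Real.cos (π / 13)^11 + 5120*Real.cos (π / 13)^9 + (-4608)*Real.cos (π / 13)^7 + 1792*Real.cos (π / 13)^5 + (-280)*Real.cos (π / 13)^3 + 12*Real.cos (π / 13)) * hsq
  have hpi : Real.cos (13 * π / 13) = -1 := by
    rw [show (13 * π / 13 : ℝ) = π by ring, Real.cos_pi]
  have hfac : (Real.cos (π / 13) + 1) * (64*Real.cos (π / 13)^6 + (-32)*Real.cos (π / 13)^5 + (-80)*Real.cos (π / 13)^4 + 32*Real.cos (π / 13)^3 + 24*Real.cos (π / 13)^2 + (-6)*Real.cos (π / 13) + (-1)) ^ 2 = 0 := by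
    linear_combination hpi - hc13
  have ht_pos : 0 < Real.cos (π / 13) := by
    apply Real.cos_pos_of_mem_Ioo
    constructor
    · nlinarith [Real.pi_pos]
    · nlinarith [Real.pi_pos]
  have hM : (64*Real.cos (π / 13)^6 + (-32)*Real.cos (π / 13)^5 + (-80)*Real.cos (π / 13)^4 + 32*Real.cos (π / 13)^3 + 24*Real.cos (π / 13)^2 + (-6)*Real.cos (π / 13) + (-1)) = 0 := by
    have h1 : (0:ℝ) < Real.cos (π / 13) + 1 := by linarith
    have h2 : (64*Real.cos (π / 13)^6 + (-32)*Real.cos (π / 13)^5 + (-80)*Real.cos (π / 13)^4 + 32*Real.cos (π / 13)^3 + 24*Real.cos (π / 13)^2 + (-6)*Real.cos (π / 13) + (-1)) ^ 2 = 0 := by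
      rcases mul_eq_zero.mp hfac with h | h
      · linarith
      · exact h
    exact pow_eq_zero_iff (by norm_num) |>.mp h2
  have p1 : 0 < Real.sin (π / 13) :=
    Real.sin_pos_of_pos_of_lt_pi (by linarith) (by linarith)
  have p2 : 0 < Real.sin (2 * π / 13) :=
    Real.sin_pos_of_pos_of_lt_pi (by linarith) (by linarith)
  have p3 : 0 < Real.sin (3 * π / 13) :=
    Real.sin_pos_of_pos_of_lt_pi (by linarith) (by linarith)
  have p4 : 0 < Real.sin (4 * π / 13) :=
    Real.sin_pos_of_pos_of_lt_pi (by linarith) (by linarith)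
  have p5 : 0 < Real.sin (5 * π / 13) :=
    Real.sin_pos_of_pos_of_lt_pi (by linarith) (by linarith)
  have p6 : 0 < Real.sin (6 * π / 13) :=
    Real.sin_pos_of_pos_of_lt_pi (by linarith) (by linarith)
  have key : Real.sin (2*π/13)^2 * Real.sin (3*π/13)^2 * (Real.sin (π/13) * Real.sin (5*π/13))
      - Real.sin (π/13)^2 * Real.sin (5*π/13)^2 * (Real.sin (4*π/13) * Real.sin (6*π/13))
      - Real.sin (4*π/13)^2 * Real.sin (6*π/13)^2 * (Real.sin (2*π/13) * Real.sin (3*π/13))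
      + 4 * (Real.sin (π/13) * Real.sin (2*π/13) * Real.sin (3*π/13) * Real.sin (4*π/13) * Real.sin (5*π/13) * Real.sin (6*π/13)) = 0 := by
    rw [hs2, hs3, hs4, hs5, hs6]
    linear_combination (Real.sin (π / 13)^6 * ((-8192)*Real.cos (π / 13)^13 + (-4096)*Real.cos (π / 13)^12 + 14336*Real.cos (π / 13)^11 + 5120*Real.cos (π / 13)^10 + (-8192)*Real.cos (π / 13)^9 + (-1024)*Real.cos (π / 13)^8 + 1536*Real.cos (π / 13)^7 + (-768)*Real.cos (π / 13)^6 + 32*Real.cos (π / 13)^5 + 304*Real.cos (π / 13)^4 + (-24)*Real.cos (π / 13)^3 + (-28)*Real.cos (π / 13)^2)) * hM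
  have n2 : Real.sin (2*π/13) ≠ 0 := ne_of_gt p2
  have n3 : Real.sin (3*π/13) ≠ 0 := ne_of_gt p3
  have n4 : Real.sin (4*π/13) ≠ 0 := ne_of_gt p4
  have n5 : Real.sin (5*π/13) ≠ 0 := ne_of_gt p5
  have n6 : Real.sin (6*π/13) ≠ 0 := ne_of_gt p6
  have n1 : Real.sin (π/13) ≠ 0 := ne_of_gt p1
  generalize Real.sin (π/13) = a1 at n1 key ⊢
  generalize Real.sin (2*π/13) = a2 at n2 key ⊢
  generalize Real.sin (3*π/13) = a3 at n3 key ⊢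
  generalize Real.sin (4*π/13) = a4 at n4 key ⊢
  generalize Real.sin (5*π/13) = a5 at n5 key ⊢
  generalize Real.sin (6*π/13) = a6 at n6 key ⊢
  field_simp
  linear_combination key
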